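/- A code C = {c^1, …, c^m} ⊆ Q^n is a wide-sense 2-frameproof code if and only if for each i ∈ [m], the coincidence family X_i = { I(i,j) : j ∈ [m], j ≠ i } is a non 2-covering Sperner family with exactly m-1 distinct members. -/
import Mathlib


theorem stmt_19 (n m : ℕ) (Q : Type*) [DecidableEq Q]
    (c : Fin m → Fin n → Q) (hinj : Function.Injective c) :
    -- `C` is wide-sense 2-frameproof: whenever `c i` lies in the wide-sense
    -- descendant set of the codewords indexed by a nonempty `S` with `|S| ≤ 2`
    -- (i.e. `c i` agrees with them on every coordinate where they all agree),
    -- then `i ∈ S`.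
    (∀ S : Finset (Fin m), S.Nonempty → S.card ≤ 2 →
        ∀ i : Fin m,
          (∀ l : Fin n, (∀ j ∈ S, ∀ j' ∈ S, c j l = c j' l) → ∀ j ∈ S, c i l = c j l) →
          i ∈ S) ↔
      -- for each `i`, the coincidence family `X_i` is a non 2-covering Sperner
      -- family with exactly `m - 1` distinct members
      ∀ i : Fin m,
        (∀ A ∈ (Finset.univ.erase i).image
            (fun j => Finset.univ.filter fun l => c i l = c j l),
          ∀ B ∈ (Finset.univ.erase i).image
            (fun j => Finset.univ.filter fun l => c i l = c j l),
          A ≠ B → ¬ A ⊆ B) ∧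
        (∀ A ∈ (Finset.univ.erase i).image
            (fun j => Finset.univ.filter fun l => c i l = c j l),
          ∀ B ∈ (Finset.univ.erase i).image
            (fun j => Finset.univ.filter fun l => c i l = c j l),
          A ∪ B ≠ Finset.univ) ∧
        ((Finset.univ.erase i).image
          (fun j => Finset.univ.filter fun l => c i l = c j l)).card = m - 1 := by

  constructor
  · intro P
    have key : ∀ i j j' : Fin m, j ≠ i → j' ≠ i →
        (Finset.univ.filter fun l => c i l = c j l) ⊆
          (Finset.univ.filter fun l => c i l = c j' l) → j' = j := by
      intro i j j' hji hj'i hsub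
      have h2 : ({i, j} : Finset (Fin m)).card ≤ 2 :=
        (Finset.card_insert_le _ _).trans (by simp)
      have hmem := P {i, j} ⟨i, by simp⟩ h2 j' ?_
      · rcases Finset.mem_insert.1 hmem with h | h
        · exact absurd h hj'i
        · exact Finset.mem_singleton.1 h
      · intro l hl k hk
        have hij : c i l = c j l := hl i (by simp) j (by simp)
        have hlB : l ∈ (Finset.univ.filter fun l => c i l = c j' l) :=
          hsub (by simp [hij])
        have hij' : c i l = c j' l := (Finset.mem_filter.1 hlB).2
        rcases Finset.mem_insert.1 hk with rfl | hk
        · exact hij'.symm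
        · rw [Finset.mem_singleton] at hk
          subst hk
          exact hij'.symm.trans hij
    intro i
    refine ⟨?_, ?_, ?_⟩
    · rintro A hA B hB hAB hsub
      simp only [Finset.mem_image, Finset.mem_erase] at hA hB
      obtain ⟨j, ⟨hji, -⟩, rfl⟩ := hA
      obtain ⟨j', ⟨hj'i, -⟩, rfl⟩ := hB
      exact hAB (by rw [key i j j' hji hj'i hsub])
    · rintro A hA B hB hun
      simp only [Finset.mem_image, Finset.mem_erase] at hA hB
      obtain ⟨j, ⟨hji, -⟩, rfl⟩ := hA
      obtain ⟨j', ⟨hj'i, -⟩, rfl⟩ := hB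
      have h2 : ({j, j'} : Finset (Fin m)).card ≤ 2 :=
        (Finset.card_insert_le _ _).trans (by simp)
      have hi := P {j, j'} ⟨j, by simp⟩ h2 i ?_
      · rcases Finset.mem_insert.1 hi with rfl | h
        · exact hji rfl
        · exact hj'i (Finset.mem_singleton.1 h).symm
      · intro l hl k hk
        have hjj' : c j l = c j' l := hl j (by simp) j' (by simp)
        have hl2 : l ∈ (Finset.univ.filter fun l => c i l = c j l) ∪
            (Finset.univ.filter fun l => c i l = c j' l) := by
          rw [hun]; exact Finset.mem_univ l
        have hcij : c i l = c j l := by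
          rcases Finset.mem_union.1 hl2 with h | h
          · exact (Finset.mem_filter.1 h).2
          · exact ((Finset.mem_filter.1 h).2).trans hjj'.symm
        rcases Finset.mem_insert.1 hk with rfl | hk
        · exact hcij
        · rw [Finset.mem_singleton] at hk
          subst hk
          exact hcij.trans hjj'
    · rw [Finset.card_image_of_injOn, Finset.card_erase_of_mem (Finset.mem_univ i),
        Finset.card_univ, Fintype.card_fin]
      intro a ha b hb hab
      have haI : a ≠ i := (Finset.mem_erase.1 ha).1
      have hbI : b ≠ i := (Finset.mem_erase.1 hb).1
      exact (key i a b haI hbI (le_of_eq hab)).symm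
  · intro H S hS hcard i hdesc
    interval_cases h : S.card
    · exact absurd h (by simpa using Finset.card_ne_zero_of_mem hS.choose_spec)
    · obtain ⟨j, rfl⟩ := Finset.card_eq_one.1 h
      have : c i = c j := by
        funext l
        exact hdesc l (by intro a ha b hb; simp at ha hb; subst ha; subst hb; rfl)
          j (Finset.mem_singleton_self j)
      rw [hinj this]
      exact Finset.mem_singleton_self j
    · obtain ⟨j, j', hjj', rfl⟩ := Finset.card_eq_two.1 h
      by_contra hi
      have hij : i ≠ j := fun hh => hi (by simp [hh])
      have hij' : i ≠ j' := fun hh => hi (by simp [hh])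
      obtain ⟨hSper, -, hcardj⟩ := H j
      have hAmem : (Finset.univ.filter fun l => c j l = c j' l) ∈
          (Finset.univ.erase j).image
            (fun k => Finset.univ.filter fun l => c j l = c k l) :=
        Finset.mem_image.2 ⟨j', Finset.mem_erase.2 ⟨hjj'.symm, Finset.mem_univ _⟩, rfl⟩
      have hBmem : (Finset.univ.filter fun l => c j l = c i l) ∈
          (Finset.univ.erase j).image
            (fun k => Finset.univ.filter fun l => c j l = c k l) :=
        Finset.mem_image.2 ⟨i, Finset.mem_erase.2 ⟨hij, Finset.mem_univ _⟩, rfl⟩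
      have hsub : (Finset.univ.filter fun l => c j l = c j' l) ⊆
          (Finset.univ.filter fun l => c j l = c i l) := by
        intro l hl
        have hjl : c j l = c j' l := (Finset.mem_filter.1 hl).2
        have := hdesc l ?_ j (by simp)
        · exact Finset.mem_filter.2 ⟨Finset.mem_univ l, this.symm⟩
        · intro a ha b hb
          simp only [Finset.mem_insert, Finset.mem_singleton] at ha hb
          rcases ha with rfl | rfl <;> rcases hb with rfl | rfl
          · rfl
          · exact hjl
          · exact hjl.symm
          · rfl
      rcases eq_or_ne (Finset.univ.filter fun l => c j l = c j' l)
          (Finset.univ.filter fun l => c j l = c i l) with heq | hne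
      · -- contradiction with injectivity from card
        have hinjOn : Set.InjOn (fun k => Finset.univ.filter fun l => c j l = c k l)
            (Finset.univ.erase j) := by
          rw [← Finset.card_image_iff, hcardj,
            Finset.card_erase_of_mem (Finset.mem_univ j), Finset.card_univ,
            Fintype.card_fin]
        have : j' = i := hinjOn
          (Finset.mem_erase.2 ⟨hjj'.symm, Finset.mem_univ _⟩)
          (Finset.mem_erase.2 ⟨hij, Finset.mem_univ _⟩) heq
        exact hij' this.symm
      · exact hSper _ hAmem _ hBmem hne hsub
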